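/- arXiv:2004.13357 — 4 statements merged into one kernel-verified Lean document; each statement's English description precedes it below -/
import Mathlib

section
/- The Langevin function L(x) = coth(x) - 1/x (extended by L(0) = 0) is differentiable on ℝ with derivative L'(x) = 1/x² - 1/sinh²(x) for x ≠ 0 and L'(0) = 1/3. -/
open Real Filter Set Topology

lemma sinh_div_tendsto : Tendsto (fun x : ℝ => Real.sinh x / x) (𝓝[≠] 0) (𝓝 1) := by
  have h := (Real.hasDerivAt_sinh 0)
  rw [Real.cosh_zero] at h
  have := hasDerivAt_iff_tendsto_slope.mp h
  refine this.congr' ?_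
  filter_upwards [self_mem_nhdsWithin] with x hx
  simp [slope_def_field, Real.sinh_zero, div_eq_div_iff]

lemma cube_tendsto :
    Tendsto (fun x : ℝ => (x * Real.cosh x - Real.sinh x) / x ^ 3) (𝓝[≠] 0) (𝓝 (1/3)) := by
  apply HasDerivAt.lhopital_zero_nhdsNE
    (f' := fun x => x * Real.sinh x) (g' := fun x => 3 * x ^ 2)
  · filter_upwards with x
    have h1 : HasDerivAt (fun y : ℝ => y * Real.cosh y - Real.sinh y)
        (1 * Real.cosh x + id x * Real.sinh x - Real.cosh x) x := ((hasDerivAt_id x).mul (Real.hasDerivAt_cosh x)).sub (Real.hasDerivAt_sinh x)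
    convert h1 using 1
    simp [id]
  · filter_upwards with x
    simpa using (hasDerivAt_pow 3 x)
  · filter_upwards [self_mem_nhdsWithin] with x hx
    simp only [mem_compl_iff, mem_singleton_iff] at hx
    positivity
  · have : ContinuousAt (fun x : ℝ => x * Real.cosh x - Real.sinh x) 0 := by fun_prop
    have h := this.tendsto
    simpa using h.mono_left nhdsWithin_le_nhds
  · have : ContinuousAt (fun x : ℝ => x ^ 3) 0 := by fun_prop
    have h := this.tendsto
    simpa using h.mono_left nhdsWithin_le_nhds
  · have : Tendsto (fun x : ℝ => Real.sinh x / x / 3) (𝓝[≠] 0) (𝓝 (1/3)) := by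
      simpa using sinh_div_tendsto.div_const 3
    refine this.congr' ?_
    filter_upwards [self_mem_nhdsWithin] with x hx
    simp only [mem_compl_iff, mem_singleton_iff] at hx
    field_simp

noncomputable def Langevin (x : ℝ) : ℝ := if x = 0 then 0 else Real.cosh x / Real.sinh x - 1 / x

theorem langevin_hasDerivAt :
    ∀ x : ℝ, HasDerivAt Langevin
      (if x = 0 then 1 / 3 else 1 / x ^ 2 - 1 / (Real.sinh x) ^ 2) x := by
  intro x
  rcases eq_or_ne x 0 with rfl | hx
  · simp only [if_pos rfl]
    rw [hasDerivAt_iff_tendsto_slope]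
    have key : Tendsto (fun x : ℝ =>
        ((x * Real.cosh x - Real.sinh x) / x ^ 3) / (Real.sinh x / x)) (𝓝[≠] 0) (𝓝 (1/3)) := by
      have := cube_tendsto.div sinh_div_tendsto one_ne_zero
      simpa [Pi.div_def] using this
    refine key.congr' ?_
    filter_upwards [self_mem_nhdsWithin] with y hy
    simp only [mem_compl_iff, mem_singleton_iff] at hy
    have hs : Real.sinh y ≠ 0 := Real.sinh_ne_zero.mpr hy
    simp only [slope_def_field, Langevin, if_neg hy, Real.sinh_zero, sub_zero]
    field_simp
    simp
  · simp only [if_neg hx]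
    have hs : Real.sinh x ≠ 0 := Real.sinh_ne_zero.mpr hx
    have hc : HasDerivAt (fun y : ℝ => Real.cosh y / Real.sinh y - 1 / y)
        ((Real.sinh x * Real.sinh x - Real.cosh x * Real.cosh x) / Real.sinh x ^ 2
          - (-(1 / x ^ 2))) x := by
      have h2 := ((Real.hasDerivAt_cosh x).div (Real.hasDerivAt_sinh x) hs)
      have h3 : HasDerivAt (fun y : ℝ => 1 / y) (-(1 / x ^ 2)) x := by
        simpa using (hasDerivAt_inv hx)
      exact h2.sub h3
    have heq : (Real.sinh x * Real.sinh x - Real.cosh x * Real.cosh x) / Real.sinh x ^ 2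
        - (-(1 / x ^ 2)) = 1 / x ^ 2 - 1 / Real.sinh x ^ 2 := by
      have h2 : Real.sinh x * Real.sinh x - Real.cosh x * Real.cosh x = -1 := by
        nlinarith [Real.cosh_sq_sub_sinh_sq x]
      rw [h2]
      field_simp
      ring
    rw [heq] at hc
    refine hc.congr_of_eventuallyEq ?_
    filter_upwards [isOpen_compl_singleton.mem_nhds hx] with y hy
    simp only [mem_compl_iff, mem_singleton_iff] at hy
    simp [Langevin, if_neg hy]
end

section
/- Let m : ℝ → ℝ be odd and twice continuously differentiable, and let B : ℝ → ℝ³ be differentiable such that B'(t) is always a scalar multiple of B(t). Define M(t) = m(|B(t)|) · B(t)/|B(t)| for B(t) ≠ 0 and M(t) = 0 when B(t) = 0 (equivalently M(t) = g(|B(t)|)·B(t) where g(x) = m(x)/x extended by g(0) = m'(0)). Then M is differentiable with M'(t) = m'(|B(t)|) · B'(t) for all t. -/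
open Filter Real

local notation "⟪" x ", " y "⟫" => @inner ℝ _ _ x y

theorem magnetization_deriv
    (m : ℝ → ℝ) (hodd : ∀ x, m (-x) = - m x) (hm : ContDiff ℝ 2 m)
    (B : ℝ → EuclideanSpace ℝ (Fin 3)) (hB : Differentiable ℝ B)
    (hpar : ∀ t : ℝ, ∃ c : ℝ, deriv B t = c • B t) :
    ∀ t : ℝ, HasDerivAt
      (fun s => (if ‖B s‖ = 0 then deriv m 0 else m ‖B s‖ / ‖B s‖) • B s)
      (deriv m ‖B t‖ • deriv B t) t := by
  have hmd : Differentiable ℝ m := hm.differentiable (by norm_num)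
  have hm0 : m 0 = 0 := by have := hodd 0; simp at this; linarith
  intro t
  obtain ⟨c, hc⟩ := hpar t
  have hBt : HasDerivAt B (c • B t) t := hc ▸ (hB t).hasDerivAt
  by_cases h0 : B t = 0
  · -- zero case
    have hBt0 : HasDerivAt B 0 t := by rwa [h0, smul_zero] at hBt
    -- the scalar function g is continuous at 0
    set g : ℝ → ℝ := fun x => if x = 0 then deriv m 0 else m x / x with hg
    have hslope : Filter.Tendsto (fun x => m x / x) (nhdsWithin 0 {(0:ℝ)}ᶜ)
        (nhds (deriv m 0)) := by
      have := (hmd 0).hasDerivAt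
      rw [hasDerivAt_iff_tendsto_slope] at this
      refine this.congr' ?_
      filter_upwards [self_mem_nhdsWithin] with x hx
      simp [slope, hm0, div_eq_inv_mul]
    have hgc : Filter.Tendsto g (nhds 0) (nhds (deriv m 0)) := by
      rw [← nhdsNE_sup_pure (0:ℝ)]
      refine Filter.Tendsto.sup ?_ ?_
      · refine hslope.congr' ?_
        filter_upwards [self_mem_nhdsWithin] with x hx
        rw [hg]
        simp only [if_neg (show x ≠ 0 by simpa using hx)]
      · have := tendsto_pure_nhds g 0
        simpa [hg] using this
    have hnormB : Filter.Tendsto (fun s => ‖B s‖) (nhds t) (nhds 0) := by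
      have : Continuous fun s => ‖B s‖ := hB.continuous.norm
      simpa [h0] using this.tendsto t
    have hbound : ∀ᶠ s in nhds t, |g ‖B s‖| ≤ |deriv m 0| + 1 := by
      have := (hgc.comp hnormB).abs
      exact this.eventually_le_const (lt_add_one _)
    have hBo : (fun s => B s) =o[nhds t] (fun s => s - t) := by
      have := hBt0.isLittleO
      simpa [h0] using this
    have hMo : (fun s => g ‖B s‖ • B s) =o[nhds t] (fun s => s - t) := by
      refine (Asymptotics.IsBigO.of_bound (|deriv m 0| + 1) ?_).trans_isLittleO hBo
      filter_upwards [hbound] with s hs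
      rw [norm_smul]
      gcongr
      simpa using hs
    have hM0 : HasDerivAt (fun s => g ‖B s‖ • B s) 0 t := by
      rw [hasDerivAt_iff_isLittleO]
      simpa [h0, hg] using hMo
    have : deriv m ‖B t‖ • deriv B t = 0 := by
      rw [hc, h0, smul_zero, smul_zero]
    rw [this]
    exact hM0.congr_of_eventuallyEq (by filter_upwards with s; simp [hg])
  · -- nonzero case
    have hr : (0:ℝ) < ‖B t‖ := norm_pos_iff.mpr h0
    have hrne : ‖B t‖ ≠ 0 := ne_of_gt hr
    have hq : ⟪B t, B t⟫ ≠ 0 := by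
      rw [real_inner_self_eq_norm_sq]
      positivity
    have hinner : HasDerivAt (fun s => ⟪B s, B s⟫)
        (⟪B t, c • B t⟫ + ⟪c • B t, B t⟫) t := hBt.inner ℝ hBt
    have h1 : HasDerivAt (fun s => ‖B s‖) (c * ‖B t‖) t := by
      have hs := (Real.hasDerivAt_sqrt hq).comp t hinner
      have heq : (fun s => Real.sqrt ⟪B s, B s⟫) = fun s => ‖B s‖ := by
        funext s
        rw [real_inner_self_eq_norm_sq, Real.sqrt_sq (norm_nonneg _)]
      simp only [Function.comp_def] at hs
      rw [heq] at hs
      refine hs.congr_deriv ?_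
      rw [real_inner_smul_left, real_inner_smul_right, real_inner_self_eq_norm_sq,
        Real.sqrt_sq (norm_nonneg _)]
      field_simp
      ring
    have h2 : HasDerivAt (fun s => m ‖B s‖) (deriv m ‖B t‖ * (c * ‖B t‖)) t :=
      ((hmd ‖B t‖).hasDerivAt).comp t h1
    have h3 : HasDerivAt (fun s => m ‖B s‖ / ‖B s‖)
        ((deriv m ‖B t‖ * (c * ‖B t‖) * ‖B t‖ - m ‖B t‖ * (c * ‖B t‖)) / (‖B t‖ ^ 2)) t :=
      h2.div h1 hrne
    have h4 := h3.smul hBt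
    have hev : ∀ᶠ s in nhds t, ‖B s‖ ≠ 0 := by
      have : ∀ᶠ s in nhds t, B s ≠ 0 :=
        (hB.continuous.continuousAt).eventually_ne h0
      filter_upwards [this] with s hs
      simpa using hs
    have h5 : HasDerivAt
        (fun s => (if ‖B s‖ = 0 then deriv m 0 else m ‖B s‖ / ‖B s‖) • B s)
        ((m ‖B t‖ / ‖B t‖) • (c • B t)
          + ((deriv m ‖B t‖ * (c * ‖B t‖) * ‖B t‖ - m ‖B t‖ * (c * ‖B t‖)) / (‖B t‖ ^ 2)) • B t) t := by
      refine h4.congr_of_eventuallyEq ?_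
      filter_upwards [hev] with s hs
      simp [hs]
    have key : (m ‖B t‖ / ‖B t‖) • (c • B t)
        + ((deriv m ‖B t‖ * (c * ‖B t‖) * ‖B t‖ - m ‖B t‖ * (c * ‖B t‖)) / (‖B t‖ ^ 2)) • B t
        = deriv m ‖B t‖ • deriv B t := by
      rw [hc, smul_smul, smul_smul, ← add_smul]
      congr 1
      field_simp
      ring
    exact key ▸ h5
end

section
/- Let m' : [0,b] → ℝ be continuous, positive, and strictly decreasing, with antiderivative m, nodes 0 = x_0 < x_1 < ⋯ < x_{N+1} = b, and tangent-scheme values s_k = m'((x_k + x_{k+1})/2). Then the L¹ error satisfies ∫_0^b |m'(x) − m_N'(x)| dx = Σ_{k=0}^N (2·m((x_k + x_{k+1})/2) − m(x_{k+1}) − m(x_k)), where m_N'(x) = s_k for x ∈ [x_k, x_{k+1}). -/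
open MeasureTheory Set intervalIntegral

lemma tangent_key (b : ℝ) (m m' : ℝ → ℝ)
    (hderiv : ∀ s ∈ Set.Icc (0 : ℝ) b, HasDerivAt m (m' s) s)
    (hcont : ContinuousOn m' (Set.Icc 0 b))
    (hanti : StrictAntiOn m' (Set.Icc 0 b))
    (c d : ℝ) (hcd : c < d) (hsub : Set.Icc c d ⊆ Set.Icc 0 b) :
    ∫ s in c..d, |m' s - m' ((c + d) / 2)| =
      2 * m ((c + d) / 2) - m d - m c := by
  set mid := (c + d) / 2 with hmid
  have hcm : c < mid := by rw [hmid]; linarith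
  have hmd : mid < d := by rw [hmid]; linarith
  have hsub1 : Set.Icc c mid ⊆ Set.Icc 0 b :=
    (Set.Icc_subset_Icc le_rfl hmd.le).trans hsub
  have hsub2 : Set.Icc mid d ⊆ Set.Icc 0 b :=
    (Set.Icc_subset_Icc hcm.le le_rfl).trans hsub
  have hmidmem : mid ∈ Set.Icc 0 b := hsub ⟨hcm.le, hmd.le⟩
  have habs1 : IntervalIntegrable (fun s => |m' s - m' mid|) volume c mid := by
    apply ContinuousOn.intervalIntegrable
    rw [Set.uIcc_of_le hcm.le]
    exact ((hcont.mono hsub1).sub continuousOn_const).abs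
  have habs2 : IntervalIntegrable (fun s => |m' s - m' mid|) volume mid d := by
    apply ContinuousOn.intervalIntegrable
    rw [Set.uIcc_of_le hmd.le]
    exact ((hcont.mono hsub2).sub continuousOn_const).abs
  have e1 : ∫ s in c..mid, |m' s - m' mid| = ∫ s in c..mid, (m' s - m' mid) := by
    apply intervalIntegral.integral_congr
    intro s hs
    rw [Set.uIcc_of_le hcm.le] at hs
    have hle : m' mid ≤ m' s := by
      rcases eq_or_lt_of_le hs.2 with h | h
      · rw [h]
      · exact (hanti (hsub1 hs) hmidmem h).le
    simp only [abs_of_nonneg (sub_nonneg.mpr hle)]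
  have e2 : ∫ s in mid..d, |m' s - m' mid| = ∫ s in mid..d, (m' mid - m' s) := by
    apply intervalIntegral.integral_congr
    intro s hs
    rw [Set.uIcc_of_le hmd.le] at hs
    have hle : m' s ≤ m' mid := by
      rcases eq_or_lt_of_le hs.1 with h | h
      · rw [← h]
      · exact (hanti hmidmem (hsub2 hs) h).le
    simp only [abs_of_nonpos (sub_nonpos.mpr hle), neg_sub]
  have ftc1 : ∫ s in c..mid, m' s = m mid - m c := by
    apply intervalIntegral.integral_eq_sub_of_hasDerivAt
    · intro s hs
      rw [Set.uIcc_of_le hcm.le] at hs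
      exact hderiv s (hsub1 hs)
    · apply ContinuousOn.intervalIntegrable
      rw [Set.uIcc_of_le hcm.le]
      exact hcont.mono hsub1
  have ftc2 : ∫ s in mid..d, m' s = m d - m mid := by
    apply intervalIntegral.integral_eq_sub_of_hasDerivAt
    · intro s hs
      rw [Set.uIcc_of_le hmd.le] at hs
      exact hderiv s (hsub2 hs)
    · apply ContinuousOn.intervalIntegrable
      rw [Set.uIcc_of_le hmd.le]
      exact hcont.mono hsub2
  have hi1 : IntervalIntegrable m' volume c mid := by
    apply ContinuousOn.intervalIntegrable
    rw [Set.uIcc_of_le hcm.le]; exact hcont.mono hsub1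
  have hi2 : IntervalIntegrable m' volume mid d := by
    apply ContinuousOn.intervalIntegrable
    rw [Set.uIcc_of_le hmd.le]; exact hcont.mono hsub2
  have v1 : ∫ s in c..mid, (m' s - m' mid) = (m mid - m c) - m' mid * (mid - c) := by
    rw [intervalIntegral.integral_sub hi1 intervalIntegrable_const, ftc1,
      intervalIntegral.integral_const, smul_eq_mul]
    ring
  have v2 : ∫ s in mid..d, (m' mid - m' s) = m' mid * (d - mid) - (m d - m mid) := by
    rw [intervalIntegral.integral_sub intervalIntegrable_const hi2, ftc2,
      intervalIntegral.integral_const, smul_eq_mul]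
    ring
  rw [← intervalIntegral.integral_add_adjacent_intervals habs1 habs2, e1, e2, v1, v2]
  have : mid - c = d - mid := by rw [hmid]; ring
  rw [this]; ring
theorem tangent_L1_error
    (b : ℝ) (hb : 0 < b) (m m' : ℝ → ℝ)
    (hderiv : ∀ s ∈ Set.Icc (0 : ℝ) b, HasDerivAt m (m' s) s)
    (hcont : ContinuousOn m' (Set.Icc 0 b))
    (hpos : ∀ s ∈ Set.Icc (0 : ℝ) b, 0 < m' s)
    (hanti : StrictAntiOn m' (Set.Icc 0 b))
    (N : ℕ) (x : Fin (N + 2) → ℝ) (hmono : StrictMono x)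
    (hx0 : x 0 = 0) (hxlast : x (Fin.last (N + 1)) = b)
    (mN' : ℝ → ℝ)
    (hstep : ∀ k : Fin (N + 1), ∀ y ∈ Set.Ico (x k.castSucc) (x k.succ),
      mN' y = m' ((x k.castSucc + x k.succ) / 2)) :
    ∫ s in (0 : ℝ)..b, |m' s - mN' s| =
      ∑ k : Fin (N + 1),
        (2 * m ((x k.castSucc + x k.succ) / 2) - m (x k.succ) - m (x k.castSucc)) := by
  -- subintervals sit inside [0, b]
  have hsubk : ∀ k : Fin (N + 1), Set.Icc (x k.castSucc) (x k.succ) ⊆ Set.Icc 0 b := by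
    intro k
    apply Set.Icc_subset_Icc
    · rw [← hx0]; exact hmono.monotone (Fin.zero_le _)
    · rw [← hxlast]; exact hmono.monotone (Fin.le_last _)
  have hlt : ∀ k : Fin (N + 1), x k.castSucc < x k.succ := fun k =>
    hmono (Fin.castSucc_lt_succ (i := k))
  -- a.e. congruence on each subinterval
  have hcongr : ∀ k : Fin (N + 1),
      (fun s => |m' s - mN' s|) =ᵐ[MeasureTheory.volume.restrict
        (Set.uIoc (x k.castSucc) (x k.succ))]
      (fun s => |m' s - m' ((x k.castSucc + x k.succ) / 2)|) := by
    intro k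
    apply (MeasureTheory.ae_restrict_iff' measurableSet_uIoc).mpr
    have hne : ∀ᵐ s : ℝ, s ≠ x k.succ := by
      rw [MeasureTheory.ae_iff]
      simp only [ne_eq, not_not, Set.setOf_eq_eq_singleton]
      exact Real.volume_singleton
    filter_upwards [hne] with s hs hmem
    rw [Set.uIoc_of_le (hlt k).le] at hmem
    rw [hstep k s ⟨hmem.1.le, lt_of_le_of_ne hmem.2 hs⟩]
  -- interval integrability of the integrand on each subinterval
  have hii : ∀ k : Fin (N + 1),
      IntervalIntegrable (fun s => |m' s - mN' s|) MeasureTheory.volume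
        (x k.castSucc) (x k.succ) := by
    intro k
    have : IntervalIntegrable (fun s => |m' s - m' ((x k.castSucc + x k.succ) / 2)|)
        MeasureTheory.volume (x k.castSucc) (x k.succ) := by
      apply ContinuousOn.intervalIntegrable
      rw [Set.uIcc_of_le (hlt k).le]
      exact ((hcont.mono (hsubk k)).sub continuousOn_const).abs
    exact this.congr_ae (hcongr k).symm
  -- per-interval value
  have key : ∀ k : Fin (N + 1),
      ∫ s in (x k.castSucc)..(x k.succ), |m' s - mN' s| =
        2 * m ((x k.castSucc + x k.succ) / 2) - m (x k.succ) - m (x k.castSucc) := by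
    intro k
    rw [intervalIntegral.integral_congr_ae
      ((MeasureTheory.ae_restrict_iff' measurableSet_uIoc).mp (hcongr k))]
    exact tangent_key b m m' hderiv hcont hanti _ _ (hlt k) (hsubk k)
  -- identify nodes with a ℕ-indexed sequence
  open Fin.NatCast in
  set a : ℕ → ℝ := fun i => x i with ha
  have haval : ∀ k : Fin (N + 1), a k = x k.castSucc ∧ a (k + 1) = x k.succ := by
    intro k
    constructor
    · show x _ = x _
      congr 1
      ext
      simp [Fin.val_cast_of_lt (lt_trans k.isLt (Nat.lt_succ_self _))]
    · show x _ = x _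
      congr 1
      ext
      simp [Fin.val_cast_of_lt (Nat.succ_lt_succ k.isLt)]
  have hsum : ∫ s in (a 0)..(a (N + 1)), |m' s - mN' s| =
      ∑ i ∈ Finset.range (N + 1), ∫ s in a i..a (i + 1), |m' s - mN' s| := by
    symm
    apply intervalIntegral.sum_integral_adjacent_intervals
    intro i hi
    have h1 := (haval ⟨i, hi⟩).1
    have h2 := (haval ⟨i, hi⟩).2
    simp only [Fin.val_mk] at h1 h2  -- maybe unnecessary
    rw [h1, h2]
    exact hii ⟨i, hi⟩
  have ha0 : a 0 = 0 := by rw [← hx0]; show x _ = x _; congr 1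
  have halast : a (N + 1) = b := by
    rw [← hxlast]
    show x _ = x _
    congr 1
    ext
    rw [Fin.val_cast_of_lt (Nat.lt_succ_self (N + 1))]
    rfl
  rw [← ha0, ← halast, hsum, ← Fin.sum_univ_eq_sum_range
    (fun i => ∫ s in a i..a (i + 1), |m' s - mN' s|) (N + 1)]
  apply Finset.sum_congr rfl
  intro k _
  rw [(haval k).1, (haval k).2, key k]
end

section
/- Let B : ℝ → ℝ³ be twice differentiable with B(t) ≠ 0, and suppose B'(s) is parallel to B(s) for all s in a neighborhood of t. Then the acceleration satisfies B''(t) = (B(t)/|B(t)|) · (d²/dt²)|B(t)|, i.e., the second derivative of B is also directed along B. -/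
theorem acceleration_along_field
    (B : ℝ → EuclideanSpace ℝ (Fin 3)) (hB : ContDiff ℝ 2 B)
    (t : ℝ) (ht : B t ≠ 0)
    (hpar : ∀ᶠ s in nhds t, ∃ c : ℝ, deriv B s = c • B s) :
    deriv (deriv B) t =
      (deriv (deriv (fun s => ‖B s‖)) t) • (‖B t‖⁻¹ • B t) := by
  have hBc : Continuous B := hB.continuous
  have hBdiff : Differentiable ℝ B := hB.differentiable (by norm_num)
  have hB'c : Continuous (deriv B) := hB.continuous_deriv (by norm_num)
  -- the scalar function in B' = l • B
  set l : ℝ → ℝ := fun s => (‖B s‖ ^ 2)⁻¹ * inner ℝ (deriv B s) (B s) with hldef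
  have hne : ∀ᶠ s in nhds t, B s ≠ 0 := hBc.continuousAt.eventually_ne ht
  have hder : ∀ᶠ s in nhds t, deriv B s = l s • B s := by
    filter_upwards [hpar, hne] with s hc hs
    obtain ⟨c, hc⟩ := hc
    have hns : ‖B s‖ ≠ 0 := norm_ne_zero_iff.mpr hs
    have : l s = c := by
      simp only [hldef, hc, real_inner_smul_left, real_inner_self_eq_norm_sq]
      field_simp
    rw [this, hc]
  obtain ⟨ε, hε, hball⟩ : ∃ ε > 0, ∀ s ∈ Metric.ball t ε,
      deriv B s = l s • B s ∧ B s ≠ 0 := by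
    rcases Metric.eventually_nhds_iff_ball.mp (hder.and hne) with ⟨ε, hε, h⟩
    exact ⟨ε, hε, fun s hs => h s hs⟩
  have htball : t ∈ Metric.ball t ε := Metric.mem_ball_self hε
  have hlcont : ∀ s ∈ Metric.ball t ε, ContinuousAt l s := by
    intro s hs
    have h1 : ContinuousAt (fun s => ‖B s‖ ^ 2) s := ((hBc.norm).pow 2).continuousAt
    have h2 : (‖B s‖ ^ 2) ≠ 0 := pow_ne_zero 2 (norm_ne_zero_iff.mpr (hball s hs).2)
    exact (h1.inv₀ h2).mul (hB'c.continuousAt.inner hBc.continuousAt)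
  have hlC : ContinuousOn l (Metric.ball t ε) :=
    fun x hx => (hlcont x hx).continuousWithinAt
  set L : ℝ → ℝ := fun s => ∫ u in t..s, l u with hLdef
  have hLder : ∀ s ∈ Metric.ball t ε, HasDerivAt L (l s) s := by
    intro s hs
    have hsub : Set.uIcc t s ⊆ Metric.ball t ε :=
      ((convex_ball t ε).ordConnected).uIcc_subset htball hs
    exact intervalIntegral.integral_hasDerivAt_right
      ((hlC.mono hsub).intervalIntegrable)
      (hlC.stronglyMeasurableAtFilter Metric.isOpen_ball s hs)
      (hlcont s hs)
  -- the function exp(-L) • B has zero derivative on the ball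
  have hgder : ∀ s ∈ Metric.ball t ε,
      HasDerivAt (fun u => Real.exp (-(L u)) • B u) 0 s := by
    intro s hs
    have h1 : HasDerivAt (fun u => Real.exp (-(L u)))
        (Real.exp (-(L s)) * -(l s)) s := ((hLder s hs).neg).exp
    have h2 : HasDerivAt B (l s • B s) s := by
      rw [← (hball s hs).1]; exact (hBdiff s).hasDerivAt
    have h3 := h1.smul h2
    refine h3.congr_deriv ?_
    rw [smul_smul]
    module
  have hconst : ∀ s ∈ Metric.ball t ε, Real.exp (-(L s)) • B s = B t := by
    intro s hs
    have hb := (convex_ball t ε).norm_image_sub_le_of_norm_hasDerivWithin_le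
      (f' := fun _ => (0 : EuclideanSpace ℝ (Fin 3))) (C := 0)
      (fun x hx => (hgder x hx).hasDerivWithinAt)
      (fun x _ => by simp) htball hs
    simp only [zero_mul, norm_le_zero_iff, sub_eq_zero] at hb
    rw [hb]
    have : L t = 0 := intervalIntegral.integral_same
    simp [this]
  have hline : ∀ᶠ s in nhds t, ∃ c : ℝ, B s = c • B t := by
    rw [Metric.eventually_nhds_iff_ball]
    refine ⟨ε, hε, fun s hs => ⟨Real.exp (L s), ?_⟩⟩
    rw [← hconst s hs, smul_smul, ← Real.exp_add]
    simp
  -- stage 2: express B as E • B t with E smooth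
  set E : ℝ → ℝ := fun s => (‖B t‖ ^ 2)⁻¹ * (innerSL ℝ (B t)) (B s) with hEdef
  have hBtn : ‖B t‖ ≠ 0 := norm_ne_zero_iff.mpr ht
  have hE : ContDiff ℝ 2 E := contDiff_const.mul ((innerSL ℝ (B t)).contDiff.comp hB)
  have hBE : ∀ᶠ s in nhds t, B s = E s • B t := by
    filter_upwards [hline] with s hc
    obtain ⟨c, hc⟩ := hc
    have : E s = c := by
      simp only [hEdef, hc, innerSL_apply_apply, real_inner_smul_right,
        real_inner_self_eq_norm_sq]
      field_simp
    rw [this, hc]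
  have hEt : E t = 1 := by
    simp only [hEdef, innerSL_apply_apply, real_inner_self_eq_norm_sq]
    field_simp
  have hE1 : Differentiable ℝ E := hE.differentiable (by norm_num)
  have hE2 : ContDiff ℝ 1 (deriv E) := by
    have hE' := hE
    rw [show (2 : WithTop ℕ∞) = 1 + 1 from rfl, contDiff_succ_iff_deriv] at hE'
    exact hE'.2.2
  have hE'diff : DifferentiableAt ℝ (deriv E) t := (hE2.differentiable (by norm_num)) t
  have hd1 : deriv B =ᶠ[nhds t] fun s => deriv E s • B t := by
    refine (Filter.EventuallyEq.deriv (hBE : B =ᶠ[nhds t] fun s => E s • B t)).trans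
      (Filter.Eventually.of_forall fun s => ?_)
    exact deriv_smul_const (hE1 s) (B t)
  have hd2 : deriv (deriv B) t = deriv (deriv E) t • B t := by
    rw [hd1.deriv_eq]
    exact deriv_smul_const hE'diff (B t)
  have hEpos : ∀ᶠ s in nhds t, 0 < E s :=
    hE.continuous.continuousAt.eventually (eventually_gt_nhds (by rw [hEt]; norm_num))
  have hn1 : (fun s => ‖B s‖) =ᶠ[nhds t] fun s => E s * ‖B t‖ := by
    filter_upwards [hBE, hEpos] with s h1 h2
    rw [h1, norm_smul, Real.norm_eq_abs, abs_of_pos h2]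
  have hn2 : deriv (deriv (fun s => ‖B s‖)) t = deriv (deriv E) t * ‖B t‖ := by
    have hd3 : deriv (fun s => ‖B s‖) =ᶠ[nhds t] fun s => deriv E s * ‖B t‖ :=
      (Filter.EventuallyEq.deriv hn1).trans
        (Filter.Eventually.of_forall fun s => deriv_mul_const (hE1 s) _)
    rw [hd3.deriv_eq]
    exact deriv_mul_const hE'diff _
  rw [hd2, hn2, smul_smul, mul_assoc, mul_inv_cancel₀ hBtn, mul_one]
end
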